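/- The family of linear maps f_t on ℝ² defined by f_t(e₁) = e₁, f_t(e₂) = t·e₂ (t ≠ 0) contracts ψ₅ onto ψ₁: for all x, y ∈ ℝ², the limit as t → 0 of f_t⁻¹(ψ₅(f_t(x), f_t(y))) exists and equals ψ₁(x, y). -/

import Mathlib

open Filter Topology

/-- ψ₅ : e₁∘e₁ = e₁, e₂∘e₂ = −e₁, e₁∘e₂ = e₂. -/
def psi5 (x y : ℝ × ℝ) : ℝ × ℝ := (x.1 * y.1 - x.2 * y.2, x.1 * y.2 + x.2 * y.1)

/-- ψ₁ : e₁∘e₁ = e₁, e₂∘e₂ = 0, e₁∘e₂ = e₂. -/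
def psi1 (x y : ℝ × ℝ) : ℝ × ℝ := (x.1 * y.1, x.1 * y.2 + x.2 * y.1)

/-- f_t(e₁) = e₁, f_t(e₂) = t·e₂. -/
def ft (t : ℝ) (x : ℝ × ℝ) : ℝ × ℝ := (x.1, t * x.2)

/-- f_t⁻¹(e₁) = e₁, f_t⁻¹(e₂) = t⁻¹·e₂. -/
noncomputable def ftInv (t : ℝ) (x : ℝ × ℝ) : ℝ × ℝ := (x.1, x.2 / t)

theorem stmt_14 (x y : ℝ × ℝ) :
    Tendsto (fun t : ℝ => ftInv t (psi5 (ft t x) (ft t y)))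
      (𝓝[≠] 0) (𝓝 (psi1 x y)) := by
  have h : Tendsto (fun t : ℝ => ((x.1 * y.1 - t * x.2 * (t * y.2),
      x.1 * y.2 + x.2 * y.1) : ℝ × ℝ)) (𝓝[≠] 0) (𝓝 (psi1 x y)) := by
    have : Tendsto (fun t : ℝ => ((x.1 * y.1 - t * x.2 * (t * y.2),
        x.1 * y.2 + x.2 * y.1) : ℝ × ℝ)) (𝓝 0) (𝓝 (psi1 x y)) := by
      have : ContinuousAt (fun t : ℝ => ((x.1 * y.1 - t * x.2 * (t * y.2),
          x.1 * y.2 + x.2 * y.1) : ℝ × ℝ)) 0 := by fun_prop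
      simpa [psi1, ContinuousAt] using this
    exact this.mono_left nhdsWithin_le_nhds
  refine h.congr' ?_
  filter_upwards [self_mem_nhdsWithin] with t ht
  have ht' : t ≠ 0 := ht
  simp only [ftInv, psi5, ft]
  refine Prod.ext rfl ?_
  field_simp
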